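/- Let R be a commutative ring with unity, G = ⟨x | x^n = 1⟩ a cyclic group of order n, and σ, τ the R-algebra endomorphisms of RG with σ(x) = x^u and τ(x) = x^{u+v}, where u, v ∈ {0, 1, …, n−1}. Suppose the characteristic of R divides gcd(v,n) (with the convention gcd(0,n) = n). Then every R-linear map D : RG → RG with D(1) = 0 satisfying D(x^k) = (Σ_{i+j=k−1, i,j ≥ 0} σ(x)^i τ(x)^j)·D(x) for every k ∈ {1, 2, …, n−1} is a (σ,τ)-derivation of RG. -/

import Mathlib

/-- The generator `x` of the cyclic group of order `n`, viewed inside the group ring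
`R[Multiplicative (ZMod n)]`. -/
noncomputable def xgen (R : Type*) [CommRing R] (n : ℕ) :
    MonoidAlgebra R (Multiplicative (ZMod n)) :=
  MonoidAlgebra.of R (Multiplicative (ZMod n)) (Multiplicative.ofAdd (1 : ZMod n))

/-- geometric cocycle identity -/
lemma geomS_add {A : Type*} [CommRing A] (a b : A) (s t : ℕ) :
    ∑ i ∈ Finset.range (s + t), a ^ i * b ^ (s + t - 1 - i) =
      (∑ i ∈ Finset.range s, a ^ i * b ^ (s - 1 - i)) * b ^ t +
        a ^ s * ∑ i ∈ Finset.range t, a ^ i * b ^ (t - 1 - i) := by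
  rw [Finset.sum_range_add, Finset.sum_mul, Finset.mul_sum]
  congr 1
  · refine Finset.sum_congr rfl fun i hi => ?_
    have hi' : i < s := Finset.mem_range.mp hi
    have : s + t - 1 - i = (s - 1 - i) + t := by omega
    rw [this, pow_add, mul_assoc]
  · refine Finset.sum_congr rfl fun i hi => ?_
    have hi' : i < t := Finset.mem_range.mp hi
    have h1 : s + t - 1 - (s + i) = t - 1 - i := by omega
    rw [h1, pow_add, mul_assoc]


/-- With `σ x = x^u`, `τ x = x^{u+v}` (`u, v < n`), if the characteristic
of `R` divides `gcd(v,n)`, then every `R`-linear map `D` with `D 1 = 0` satisfying the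
relations (2.1) is a `(σ,τ)`-derivation. -/
theorem stmt13 {R : Type*} [CommRing R] (n u v : ℕ) [NeZero n]
    (hu : u < n) (hv : v < n)
    (hchar : ringChar R ∣ Nat.gcd v n)
    (σ τ : MonoidAlgebra R (Multiplicative (ZMod n)) →ₐ[R] MonoidAlgebra R (Multiplicative (ZMod n)))
    (hσ : σ (xgen R n) = xgen R n ^ u) (hτ : τ (xgen R n) = xgen R n ^ (u + v))
    (D : MonoidAlgebra R (Multiplicative (ZMod n)) →ₗ[R] MonoidAlgebra R (Multiplicative (ZMod n)))
    (hD1 : D 1 = 0)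
    (hrel : ∀ k : ℕ, 1 ≤ k → k ≤ n - 1 →
      D (xgen R n ^ k) =
        (∑ p ∈ Finset.HasAntidiagonal.antidiagonal (k - 1), σ (xgen R n) ^ p.1 * τ (xgen R n) ^ p.2) *
          D (xgen R n)) :
    ∀ a b, D (a * b) = D a * τ b + σ a * D b := by
  have hnpos : 0 < n := Nat.pos_of_ne_zero (NeZero.ne n)
  set X : MonoidAlgebra R (Multiplicative (ZMod n)) := xgen R n with hX
  -- powers of X
  have hXpow : ∀ k : ℕ, X ^ k =
      MonoidAlgebra.of R (Multiplicative (ZMod n)) (Multiplicative.ofAdd (k : ZMod n)) := by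
    intro k
    rw [hX, xgen, ← map_pow]
    congr 1
    rw [← ofAdd_nsmul]
    congr 1
    simp
  have hXdvd : ∀ k : ℕ, n ∣ k → X ^ k = 1 := by
    intro k ⟨c, hc⟩
    subst hc
    rw [hXpow]
    simp [MonoidAlgebra.one_def]
  have hXn : X ^ n = 1 := hXdvd n dvd_rfl
  -- the sums S k
  set a : MonoidAlgebra R (Multiplicative (ZMod n)) := σ X with ha
  set b : MonoidAlgebra R (Multiplicative (ZMod n)) := τ X with hb
  set S : ℕ → MonoidAlgebra R (Multiplicative (ZMod n)) :=
    fun k => ∑ i ∈ Finset.range k, a ^ i * b ^ (k - 1 - i) with hS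
  have hScocycle : ∀ s t : ℕ, S (s + t) = S s * b ^ t + a ^ s * S t := fun s t =>
    geomS_add a b s t
  have hbn : b ^ n = 1 := by
    rw [hτ, ← pow_mul]
    exact hXdvd _ ⟨u + v, by ring⟩
  -- S n = 0
  have hSn : S n = 0 := by
    have hterm : ∀ i ∈ Finset.range n, a ^ i * b ^ (n - 1 - i) =
        X ^ (u * (n - 1)) * X ^ (v * (n - 1 - i)) := by
      intro i hi
      have hi' : i < n := Finset.mem_range.mp hi
      rw [hσ, hτ, ← pow_mul, ← pow_mul, ← pow_add, ← pow_add]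
      congr 1
      have hij : i + (n - 1 - i) = n - 1 := by omega
      calc u * i + (u + v) * (n - 1 - i) = u * (i + (n - 1 - i)) + v * (n - 1 - i) := by ring
        _ = u * (n - 1) + v * (n - 1 - i) := by rw [hij]
    rw [hS]
    simp only []
    rw [Finset.sum_congr rfl hterm, ← Finset.mul_sum]
    have hrefl : ∑ i ∈ Finset.range n, X ^ (v * (n - 1 - i)) =
        ∑ j ∈ Finset.range n, X ^ (v * j) :=
      Finset.sum_range_reflect (fun j => X ^ (v * j)) n
    rw [hrefl]
    -- now show ∑ j < n, X^(v j) = 0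
    set d : ℕ := Nat.gcd v n with hd
    obtain ⟨v', hv'⟩ : d ∣ v := Nat.gcd_dvd_left v n
    obtain ⟨n', hn'⟩ : d ∣ n := Nat.gcd_dvd_right v n
    have hvn' : X ^ (v * n') = 1 := by
      refine hXdvd _ ⟨v', ?_⟩
      rw [hv', hn']; ring
    have key : ∀ m : ℕ, ∑ j ∈ Finset.range (m * n'), X ^ (v * j) =
        m • ∑ j ∈ Finset.range n', X ^ (v * j) := by
      intro m
      induction m with
      | zero => simp
      | succ m ih =>
        rw [Nat.succ_mul, Finset.sum_range_add, ih, succ_nsmul]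
        congr 1
        refine Finset.sum_congr rfl fun j _ => ?_
        have : v * (m * n' + j) = v * n' * m + v * j := by ring
        rw [this, pow_add, pow_mul, hvn', one_pow, one_mul]
    have hdR : (d : R) = 0 := (ringChar.spec R d).mpr hchar
    have hz : ∑ j ∈ Finset.range n, X ^ (v * j) = 0 := by
      rw [show Finset.range n = Finset.range (d * n') from by rw [hn'], key d,
        ← Nat.cast_smul_eq_nsmul R, hdR, zero_smul]
    rw [hz, mul_zero]
  -- D on powers of X
  have hDpow : ∀ k : ℕ, D (X ^ k) = S k * D X := by
    intro k
    induction k using Nat.strong_induction_on with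
    | _ k ih =>
      rcases lt_or_ge k n with hk | hk
      · rcases Nat.eq_zero_or_pos k with rfl | hk1
        · simpa [hS] using hD1
        · rw [hrel k hk1 (by omega),
            Finset.Nat.sum_antidiagonal_eq_sum_range_succ_mk
              (fun p => a ^ p.1 * b ^ p.2) (k - 1)]
          have : (k - 1).succ = k := by omega
          rw [this, hS]
      · have hk' : k - n < k := by omega
        have hksplit : k = (k - n) + n := by omega
        rw [hksplit, pow_add, hXn, mul_one, ih _ hk', hScocycle, hbn, hSn,
          mul_one, mul_zero, add_zero]
  -- derivation identity on powers
  have hpow2 : ∀ s t : ℕ, D (X ^ s * X ^ t) = D (X ^ s) * τ (X ^ t) + σ (X ^ s) * D (X ^ t) := by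
    intro s t
    rw [← pow_add, hDpow, hDpow, hDpow, hScocycle, map_pow, map_pow, ← hb, ← ha]
    ring
  -- monomial case
  have hmono : ∀ g h : Multiplicative (ZMod n),
      D (MonoidAlgebra.of R (Multiplicative (ZMod n)) g * MonoidAlgebra.of R (Multiplicative (ZMod n)) h) =
        D (MonoidAlgebra.of R (Multiplicative (ZMod n)) g) * τ (MonoidAlgebra.of R (Multiplicative (ZMod n)) h) +
          σ (MonoidAlgebra.of R (Multiplicative (ZMod n)) g) * D (MonoidAlgebra.of R (Multiplicative (ZMod n)) h) := by
    intro g h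
    have hg : MonoidAlgebra.of R (Multiplicative (ZMod n)) g = X ^ (Multiplicative.toAdd g).val := by
      rw [hXpow]
      congr 1
      rw [ZMod.natCast_rightInverse _]
      rfl
    have hh : MonoidAlgebra.of R (Multiplicative (ZMod n)) h = X ^ (Multiplicative.toAdd h).val := by
      rw [hXpow]
      congr 1
      rw [ZMod.natCast_rightInverse _]
      rfl
    rw [hg, hh]
    exact hpow2 _ _
  -- bilinear reduction
  intro p q
  induction p using MonoidAlgebra.induction_on with
  | of g =>
    induction q using MonoidAlgebra.induction_on with
    | of h => exact hmono g h
    | add f1 f2 h1 h2 =>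
      simp only [mul_add, map_add, h1, h2]
      ring
    | smul r f hf =>
      simp only [mul_smul_comm, map_smul, hf, smul_add, smul_mul_assoc, mul_smul_comm]
  | add f1 f2 h1 h2 =>
    simp only [add_mul, map_add, h1, h2]
    ring
  | smul r f hf =>
    simp only [smul_mul_assoc, map_smul, hf, smul_add, smul_mul_assoc, mul_smul_comm]
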